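/- Let s ≥ 2 be an integer and let (d_v)_{v∈V} be a finite family of integers with each d_v ≥ 2, indexed by a nonempty finite set V. Then Σ_{v∈V} vol(B_{s·d_v}) < Σ_{v∈V} vol(B_{d_v}) + 2π·|V|·log s. -/

import Mathlib

open Real

noncomputable def Lob (θ : ℝ) : ℝ := -∫ t in (0:ℝ)..θ, Real.log |2 * Real.sin t|

noncomputable def volB (n : ℝ) : ℝ := 2 * n * Lob (π / n)

noncomputable def vtet : ℝ := 3 * Lob (π / 3)

noncomputable def voct : ℝ := 8 * Lob (π / 4)

open MeasureTheory intervalIntegral in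
lemma intInt_log01 : IntervalIntegrable Real.log volume 0 1 := by
  rw [intervalIntegrable_iff_integrableOn_Ioc_of_le zero_le_one]
  have hg : IntegrableOn (fun u : ℝ => 2 * u ^ (-(1/2) : ℝ)) (Set.Ioc 0 1) volume := by
    have h := (intervalIntegral.intervalIntegrable_rpow' (a := 0) (b := 1)
      (r := -(1/2)) (by norm_num)).const_mul 2
    rwa [intervalIntegrable_iff_integrableOn_Ioc_of_le zero_le_one] at h
  refine hg.integrable.mono' Real.measurable_log.aestronglyMeasurable ?_
  filter_upwards [ae_restrict_mem measurableSet_Ioc] with u hu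
  obtain ⟨hu0, hu1⟩ := hu
  have hlog : Real.log u ≤ 0 := Real.log_nonpos hu0.le hu1
  rw [Real.norm_eq_abs, abs_of_nonpos hlog]
  have h1 : -Real.log u = 2 * Real.log (u ^ (-(1/2) : ℝ)) := by
    rw [Real.log_rpow hu0]; ring
  have h2 : Real.log (u ^ (-(1/2) : ℝ)) ≤ u ^ (-(1/2) : ℝ) - 1 :=
    Real.log_le_sub_one_of_pos (Real.rpow_pos_of_pos hu0 _)
  nlinarith [Real.rpow_pos_of_pos hu0 (-(1/2) : ℝ)]

open MeasureTheory intervalIntegral in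
lemma intInt_logsin {c : ℝ} (hc : 0 < c) (hc' : c ≤ π / 2) :
    IntervalIntegrable (fun u : ℝ => Real.log |2 * Real.sin (c * u)|) volume 0 1 := by
  have hmeas : Measurable fun u : ℝ => Real.log |2 * Real.sin (c * u)| - Real.log u := by
    apply Measurable.sub
    · exact Real.measurable_log.comp
        ((measurable_const.mul (Real.measurable_sin.comp
          (measurable_const.mul measurable_id))).abs)
    · exact Real.measurable_log
  have hh : IntervalIntegrable
      (fun u : ℝ => Real.log |2 * Real.sin (c * u)| - Real.log u) volume 0 1 := by
    rw [intervalIntegrable_iff_integrableOn_Ioc_of_le zero_le_one]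
    refine (integrable_const (|Real.log (4 * c / π)| + |Real.log (2 * c)|)).mono'
      hmeas.aestronglyMeasurable ?_
    filter_upwards [ae_restrict_mem measurableSet_Ioc] with u hu
    obtain ⟨hu0, hu1⟩ := hu
    have hcu0 : 0 < c * u := mul_pos hc hu0
    have hcu2 : c * u ≤ π / 2 := by
      calc c * u ≤ c * 1 := by nlinarith
      _ ≤ π / 2 := by linarith
    have hsinpos : 0 < Real.sin (c * u) :=
      Real.sin_pos_of_pos_of_lt_pi hcu0 (by linarith [Real.pi_pos])
    have habs : |2 * Real.sin (c * u)| = 2 * Real.sin (c * u) := abs_of_pos (by linarith)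
    have hupper : Real.sin (c * u) < c * u := Real.sin_lt hcu0
    have hlower : 2 / π * (c * u) ≤ Real.sin (c * u) := Real.mul_le_sin hcu0.le hcu2
    have hdiff : Real.log |2 * Real.sin (c * u)| - Real.log u
        = Real.log (2 * Real.sin (c * u) / u) := by
      rw [habs, Real.log_div (by positivity) (by positivity)]
    rw [Real.norm_eq_abs, hdiff]
    have hq0 : (0:ℝ) < 4 * c / π := by positivity
    have hlower' : 2 * (c * u) ≤ π * Real.sin (c * u) := by
      rw [div_mul_eq_mul_div, div_le_iff₀ Real.pi_pos] at hlower
      linarith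
    have hql : 4 * c / π ≤ 2 * Real.sin (c * u) / u := by
      rw [div_le_div_iff₀ Real.pi_pos (by positivity)]
      nlinarith
    have hqu : 2 * Real.sin (c * u) / u ≤ 2 * c := by
      rw [div_le_iff₀ hu0]; nlinarith
    have h1 : Real.log (4 * c / π) ≤ Real.log (2 * Real.sin (c * u) / u) :=
      Real.log_le_log hq0 hql
    have h2 : Real.log (2 * Real.sin (c * u) / u) ≤ Real.log (2 * c) :=
      Real.log_le_log (by positivity) hqu
    rw [abs_le]
    constructor
    · have := neg_abs_le (Real.log (4 * c / π)); nlinarith [abs_nonneg (Real.log (2 * c))]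
    · have := le_abs_self (Real.log (2 * c)); nlinarith [abs_nonneg (Real.log (4 * c / π))]
  have : (fun u : ℝ => Real.log |2 * Real.sin (c * u)|)
      = fun u : ℝ => (Real.log |2 * Real.sin (c * u)| - Real.log u) + Real.log u := by
    funext u; ring
  rw [this]
  exact hh.add intInt_log01

open intervalIntegral in
lemma volB_eq (n : ℝ) (hn : 0 < n) :
    volB n = -(2 * π) * ∫ u in (0:ℝ)..1, Real.log |2 * Real.sin (π / n * u)| := by
  unfold volB Lob
  have h := intervalIntegral.smul_integral_comp_mul_left
    (f := fun t => Real.log |2 * Real.sin t|) (a := (0:ℝ)) (b := 1) (π / n)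
  simp only [mul_zero, mul_one, smul_eq_mul] at h
  rw [← h]
  field_simp

open MeasureTheory intervalIntegral in
lemma key_ineq (s n : ℕ) (hs : 2 ≤ s) (hn : 2 ≤ n) :
    volB ((s : ℝ) * n) < volB n + 2 * π * Real.log s := by
  have hn0 : (0:ℝ) < n := by positivity
  have hs0 : (0:ℝ) < s := by positivity
  have hsn0 : (0:ℝ) < (s:ℝ) * n := by positivity
  set c : ℝ := π / n with hc_def
  set c' : ℝ := π / ((s:ℝ) * n) with hc'_def
  have hc : 0 < c := by positivity
  have hc' : 0 < c' := by positivity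
  have hn2 : (2:ℝ) ≤ (n:ℝ) := by exact_mod_cast hn
  have hs2 : (2:ℝ) ≤ (s:ℝ) := by exact_mod_cast hs
  have hs1' : (1:ℝ) ≤ (s:ℝ) := by linarith
  have hcπ : c ≤ π / 2 := by
    rw [hc_def, div_le_div_iff₀ hn0 two_pos]
    nlinarith [Real.pi_pos]
  have hc'c : c' = c / s := by
    rw [hc_def, hc'_def, div_div, mul_comm]
  have hc'π : c' ≤ π / 2 := by
    rw [hc'c]
    exact (div_le_self hc.le hs1').trans hcπ
  have hf : IntervalIntegrable (fun u : ℝ => Real.log |2 * Real.sin (c * u)|) volume 0 1 :=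
    intInt_logsin hc hcπ
  have hg : IntervalIntegrable (fun u : ℝ => Real.log |2 * Real.sin (c' * u)|) volume 0 1 :=
    intInt_logsin hc' hc'π
  -- pointwise inequality on Ioo 0 1
  have hpt : ∀ u ∈ Set.Ioo (0:ℝ) 1,
      0 < (Real.log |2 * Real.sin (c' * u)| + Real.log s)
        - Real.log |2 * Real.sin (c * u)| := by
    intro u hu
    obtain ⟨hu0, hu1⟩ := hu
    have hx0 : 0 < c * u := mul_pos hc hu0
    have hxπ : c * u < π := by
      have : c * u < c := by nlinarith
      nlinarith [Real.pi_pos]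
    have hx'0 : 0 < c' * u := mul_pos hc' hu0
    have hx'π : c' * u < π := by
      have h1 : c' * u ≤ c * u := by
        apply mul_le_mul_of_nonneg_right _ hu0.le
        rw [hc'c]
        exact div_le_self hc.le hs1'
      linarith
    have hsin : 0 < Real.sin (c * u) := Real.sin_pos_of_pos_of_lt_pi hx0 hxπ
    have hsin' : 0 < Real.sin (c' * u) := Real.sin_pos_of_pos_of_lt_pi hx'0 hx'π
    -- strict concavity : sin (x/s) > sin x / s
    have hconc : Real.sin (c * u) < (s:ℝ) * Real.sin (c' * u) := by
      have hmem0 : (0:ℝ) ∈ Set.Icc (0:ℝ) π := ⟨le_rfl, Real.pi_pos.le⟩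
      have hmemx : (c * u) ∈ Set.Icc (0:ℝ) π := ⟨hx0.le, hxπ.le⟩
      have hs1 : (1:ℝ) < s := by linarith
      have ha : (0:ℝ) < 1 / s := by positivity
      have hb : (0:ℝ) < 1 - 1 / s := by
        have : 1 / (s:ℝ) < 1 := by rw [div_lt_one hs0]; exact hs1
        linarith
      have hab : 1 / (s:ℝ) + (1 - 1 / s) = 1 := by ring
      have := strictConcaveOn_sin_Icc.2 hmemx hmem0 (by positivity) ha hb hab
      simp only [smul_eq_mul, mul_zero, Real.sin_zero, add_zero] at this
      have harg : 1 / (s:ℝ) * (c * u) = c' * u := by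
        rw [hc'c]; ring
      rw [harg] at this
      calc Real.sin (c * u) = (s:ℝ) * (1 / s * Real.sin (c * u)) := by
            field_simp
      _ < (s:ℝ) * Real.sin (c' * u) := by
            apply mul_lt_mul_of_pos_left _ hs0
            linarith
    have habs : |2 * Real.sin (c * u)| = 2 * Real.sin (c * u) := abs_of_pos (by linarith)
    have habs' : |2 * Real.sin (c' * u)| = 2 * Real.sin (c' * u) := abs_of_pos (by linarith)
    rw [habs, habs']
    have hlog : Real.log (2 * Real.sin (c * u)) < Real.log (2 * ((s:ℝ) * Real.sin (c' * u))) :=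
      Real.log_lt_log (by linarith) (by linarith)
    have hsplit : Real.log (2 * ((s:ℝ) * Real.sin (c' * u)))
        = Real.log (2 * Real.sin (c' * u)) + Real.log s := by
      rw [show (2:ℝ) * ((s:ℝ) * Real.sin (c' * u)) = 2 * Real.sin (c' * u) * s by ring,
        Real.log_mul (by positivity) (by positivity)]
    linarith [hlog, hsplit.symm.le]
  -- integral inequality
  have hgint : IntervalIntegrable
      (fun u : ℝ => Real.log |2 * Real.sin (c' * u)| + Real.log s) volume 0 1 :=
    hg.add intervalIntegrable_const
  have hpos : 0 < ∫ u in (0:ℝ)..1,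
      ((Real.log |2 * Real.sin (c' * u)| + Real.log s) - Real.log |2 * Real.sin (c * u)|) :=
    intervalIntegral_pos_of_pos_on (hgint.sub hf) hpt one_pos
  rw [intervalIntegral.integral_sub hgint hf, intervalIntegral.integral_add hg
    intervalIntegrable_const] at hpos
  simp only [intervalIntegral.integral_const, sub_zero, one_smul, smul_eq_mul] at hpos
  have hI : (∫ u in (0:ℝ)..1, Real.log |2 * Real.sin (c * u)|)
      < (∫ u in (0:ℝ)..1, Real.log |2 * Real.sin (c' * u)|) + Real.log s := by linarith
  rw [volB_eq _ hsn0, volB_eq _ hn0]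
  rw [← hc_def, ← hc'_def]
  nlinarith [Real.pi_pos, hI]

theorem stmt7 {ι : Type*} (V : Finset ι) (hV : V.Nonempty) (s : ℕ) (hs : 2 ≤ s)
    (d : ι → ℕ) (hd : ∀ v ∈ V, 2 ≤ d v) :
    ∑ v ∈ V, volB (s * d v) < ∑ v ∈ V, volB (d v) + 2 * π * V.card * Real.log s := by
  have h : ∑ v ∈ V, volB (s * d v) < ∑ v ∈ V, (volB (d v) + 2 * π * Real.log s) := by
    apply Finset.sum_lt_sum_of_nonempty hV
    intro v hv
    exact key_ineq s (d v) hs (hd v hv)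
  rw [Finset.sum_add_distrib, Finset.sum_const, nsmul_eq_mul] at h
  calc ∑ v ∈ V, volB (s * d v)
      < ∑ v ∈ V, volB (d v) + V.card * (2 * π * Real.log s) := h
    _ = ∑ v ∈ V, volB (d v) + 2 * π * V.card * Real.log s := by ring
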